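/- Let X be n-Hausdorff and n-σX = (n-κX)^# the Fomin-type extension of X. Then: the subspace n-σX ∖ X has a basis of clopen sets (is zero-dimensional); every subset K ⊆ n-σX ∖ X that is closed in n-σX is compact; and every closed nowhere dense subset A of X is closed in n-σX. -/

import Mathlib

open Set Topology Function

universe u v

/-- A space is `n`-Hausdorff if any `n` distinct points admit open neighborhoods
with empty intersection. -/
def NHausdorff (X : Type u) [TopologicalSpace X] (n : ℕ) : Prop :=
  ∀ x : Fin n → X, Function.Injective x →
    ∃ U : Fin n → Set X, (∀ i, IsOpen (U i) ∧ x i ∈ U i) ∧ (⋂ i, U i) = (∅ : Set X)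

/-- An open filter on `X`: a nonempty family of nonempty open sets closed under
finite intersections and open supersets. -/
structure IsOpenFilter {X : Type u} [TopologicalSpace X] (F : Set (Set X)) : Prop where
  nonempty : F.Nonempty
  isOpen_mem : ∀ U ∈ F, IsOpen U
  nonempty_mem : ∀ U ∈ F, U.Nonempty
  inter_mem : ∀ U ∈ F, ∀ V ∈ F, U ∩ V ∈ F
  superset_mem : ∀ U ∈ F, ∀ V : Set X, IsOpen V → U ⊆ V → V ∈ F

/-- An open ultrafilter: a maximal open filter. -/
def IsOpenUltrafilter {X : Type u} [TopologicalSpace X] (F : Set (Set X)) : Prop :=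
  IsOpenFilter F ∧ ∀ G : Set (Set X), IsOpenFilter G → F ⊆ G → G = F

/-- The adherence of a family of sets: `⋂ {cl U : U ∈ F}`. -/
def adh {X : Type u} [TopologicalSpace X] (F : Set (Set X)) : Set X :=
  ⋂ U ∈ F, closure U

lemma univ_mem_of_isOpenFilter {X : Type u} [TopologicalSpace X] {F : Set (Set X)}
    (hF : IsOpenFilter F) : Set.univ ∈ F := by
  obtain ⟨U, hU⟩ := hF.nonempty
  exact hF.superset_mem U hU Set.univ isOpen_univ (Set.subset_univ U)

/-- The non-full open ultrafilters on `X`: those with fewer than `n-1` adherent points. -/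
def NonFullUlt (X : Type u) [TopologicalSpace X] (n : ℕ) : Type u :=
  {F : Set (Set X) // IsOpenUltrafilter F ∧ (adh F).encard < (n - 1 : ℕ)}

/-- The points added to `X` to form `n-κX`: for each non-full open ultrafilter `U`,
a set of `n - 1 - |aU|` new points. -/
def KPoints (X : Type u) [TopologicalSpace X] (n : ℕ) : Type u :=
  Σ F : NonFullUlt X n, Fin (n - 1 - (adh F.val).ncard)

/-- The underlying set of the Katětov-type extension `n-κX`. -/
def nKatetov (X : Type u) [TopologicalSpace X] (n : ℕ) : Type u :=
  X ⊕ KPoints X n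

/-- The topology of `n-κX`: `V` is open iff `V ∩ X` is open in `X` and each added point
`p` (associated to the ultrafilter `p.1`) in `V` satisfies `V ∩ X ∈ p.1`. -/
def nKatetovTop (X : Type u) [TopologicalSpace X] (n : ℕ) :
    TopologicalSpace (nKatetov X n) where
  IsOpen V := IsOpen (Sum.inl ⁻¹' V : Set X) ∧
    ∀ p : KPoints X n, Sum.inr p ∈ V → Sum.inl ⁻¹' V ∈ p.1.val
  isOpen_univ := by
    refine ⟨by exact isOpen_univ, fun p _ => ?_⟩
    exact univ_mem_of_isOpenFilter p.1.property.1.1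
  isOpen_inter := by
    rintro s t ⟨hs1, hs2⟩ ⟨ht1, ht2⟩
    refine ⟨by exact hs1.inter ht1, fun p hp => ?_⟩
    exact p.1.property.1.1.inter_mem _ (hs2 p hp.1) _ (ht2 p hp.2)
  isOpen_sUnion := by
    intro S hS
    have hop : IsOpen (Sum.inl ⁻¹' ⋃₀ S : Set X) := by
      rw [show (Sum.inl ⁻¹' ⋃₀ S : Set X) = ⋃ s ∈ S, (Sum.inl ⁻¹' s : Set X) from
        Set.preimage_sUnion]
      exact isOpen_biUnion fun s hs => (hS s hs).1
    refine ⟨hop, ?_⟩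
    rintro p ⟨s, hsS, hps⟩
    exact p.1.property.1.1.superset_mem _ ((hS s hsS).2 p hps) _ hop
      (fun x hx => ⟨s, hsS, hx⟩)

/-- For `U` open in `Y`, the set `o(U ∩ X) = {p ∈ Y : U ∩ X ∈ O^p}`, where
`O^p = {V ∩ X : p ∈ V ∈ τ(Y)}`. -/
def oSet {Y : Type u} [TopologicalSpace Y] (X : Set Y) (U : Set Y) : Set Y :=
  {p | ∃ V : Set Y, IsOpen V ∧ p ∈ V ∧ V ∩ X = U ∩ X}

/-- The strict extension topology on `Y` (relative to the dense subset `X`),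
with base `{oU : U open in X}`. -/
def strictTop (Y : Type u) [TopologicalSpace Y] (X : Set Y) : TopologicalSpace Y :=
  TopologicalSpace.generateFrom {S | ∃ U : Set Y, IsOpen U ∧ S = oSet X U}

/-- The simple extension topology on `Y` (relative to the dense subset `X`),
generated by the sets `{p} ∪ U` for `U ∈ O^p`. -/
def simpleTop (Y : Type u) [TopologicalSpace Y] (X : Set Y) : TopologicalSpace Y :=
  TopologicalSpace.generateFrom
    {S | ∃ (p : Y) (V : Set Y), IsOpen V ∧ p ∈ V ∧ S = insert p (V ∩ X)}

section Aux

variable {X : Type u} [TopologicalSpace X] {n : ℕ}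

/-- If an open set meets every member of an open ultrafilter, it belongs to it. -/
lemma mem_of_meets {F : Set (Set X)} (hF : IsOpenUltrafilter F) {W : Set X}
    (hW : IsOpen W) (h : ∀ V ∈ F, (W ∩ V).Nonempty) : W ∈ F := by
  obtain ⟨V₀, hV₀⟩ := hF.1.nonempty
  set G : Set (Set X) := {U | IsOpen U ∧ ∃ V ∈ F, W ∩ V ⊆ U} with hG
  have hGF : IsOpenFilter G := by
    constructor
    · exact ⟨Set.univ, isOpen_univ, V₀, hV₀, Set.subset_univ _⟩
    · exact fun U hU => hU.1
    · rintro U ⟨-, V, hV, hsub⟩; exact (h V hV).mono hsub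
    · rintro U ⟨hUo, V, hV, hsub⟩ U' ⟨hU'o, V', hV', hsub'⟩
      exact ⟨hUo.inter hU'o, V ∩ V', hF.1.inter_mem V hV V' hV',
        fun x hx => ⟨hsub ⟨hx.1, hx.2.1⟩, hsub' ⟨hx.1, hx.2.2⟩⟩⟩
    · rintro U ⟨-, V, hV, hsub⟩ U' hU'o hUU'
      exact ⟨hU'o, V, hV, hsub.trans hUU'⟩
  have hFG : F ⊆ G := fun V hV =>
    ⟨hF.1.isOpen_mem V hV, V, hV, Set.inter_subset_right⟩
  have hEq := hF.2 G hGF hFG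
  rw [← hEq]
  exact ⟨hW, V₀, hV₀, Set.inter_subset_left⟩

lemma exists_disjoint_of_not_mem {F : Set (Set X)} (hF : IsOpenUltrafilter F) {W : Set X}
    (hW : IsOpen W) (h : W ∉ F) : ∃ V ∈ F, W ∩ V = ∅ := by
  by_contra hc
  push_neg at hc
  exact h (mem_of_meets hF hW hc)

lemma not_mem_of_disjoint {F : Set (Set X)} (hF : IsOpenFilter F) {W V : Set X}
    (hV : V ∈ F) (hd : W ∩ V = ∅) : W ∉ F := fun hW =>
  (hF.nonempty_mem _ (hF.inter_mem W hW V hV)).ne_empty hd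

/-- Every open filter extends to an open ultrafilter. -/
lemma exists_openUltrafilter {F₀ : Set (Set X)} (h : IsOpenFilter F₀) :
    ∃ F, F₀ ⊆ F ∧ IsOpenUltrafilter F := by
  have hub : ∀ c ⊆ {G : Set (Set X) | IsOpenFilter G}, IsChain (· ⊆ ·) c → c.Nonempty →
      ∃ ub ∈ {G : Set (Set X) | IsOpenFilter G}, ∀ s ∈ c, s ⊆ ub := by
    intro c hc hchain hne
    refine ⟨⋃₀ c, ?_, fun s hs => Set.subset_sUnion_of_mem hs⟩
    constructor
    · obtain ⟨G, hG⟩ := hne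
      obtain ⟨U, hU⟩ := (hc hG).nonempty
      exact ⟨U, G, hG, hU⟩
    · rintro U ⟨G, hG, hU⟩; exact (hc hG).isOpen_mem U hU
    · rintro U ⟨G, hG, hU⟩; exact (hc hG).nonempty_mem U hU
    · rintro U ⟨G, hG, hU⟩ V ⟨G', hG', hV⟩
      rcases hchain.total hG hG' with h' | h'
      · exact ⟨G', hG', (hc hG').inter_mem U (h' hU) V hV⟩
      · exact ⟨G, hG, (hc hG).inter_mem U hU V (h' hV)⟩
    · rintro U ⟨G, hG, hU⟩ V hVo hUV
      exact ⟨G, hG, (hc hG).superset_mem U hU V hVo hUV⟩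
  obtain ⟨m, hm₀, hm⟩ := zorn_subset_nonempty _ hub F₀ h
  exact ⟨m, hm₀, hm.1, fun G hG hsub => Set.Subset.antisymm (hm.2 hG hsub) hsub⟩

lemma finset_biInter_mem {F : Set (Set X)} (hF : IsOpenFilter F) {ι : Type v}
    (s : Finset ι) (V : ι → Set X) (h : ∀ i ∈ s, V i ∈ F) : (⋂ i ∈ s, V i) ∈ F := by
  classical
  induction s using Finset.induction_on with
  | empty => simpa using univ_mem_of_isOpenFilter hF
  | @insert a s ha ih =>
      rw [Finset.set_biInter_insert]
      exact hF.inter_mem _ (h a (Finset.mem_insert_self a s)) _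
        (ih fun i hi => h i (Finset.mem_insert_of_mem hi))

lemma isOpen_kat_iff {V : Set (nKatetov X n)} :
    IsOpen[nKatetovTop X n] V ↔ IsOpen (Sum.inl ⁻¹' V) ∧
      ∀ p : KPoints X n, Sum.inr p ∈ V → Sum.inl ⁻¹' V ∈ p.1.val :=
  Iff.rfl

lemma isOpen_inl_image {W : Set X} (hW : IsOpen W) :
    IsOpen[nKatetovTop X n] (Sum.inl '' W) := by
  rw [isOpen_kat_iff]
  constructor
  · exact (congrArg IsOpen (Set.preimage_image_eq W Sum.inl_injective)).mpr hW
  · rintro p ⟨x, -, hx⟩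
    exact absurd hx (by simp)

lemma isOpen_insert_inr {W : Set X} (hW : IsOpen W) (p : KPoints X n) (hp : W ∈ p.1.val) :
    IsOpen[nKatetovTop X n] (insert (Sum.inr p) (Sum.inl '' W)) := by
  have hpre : Sum.inl ⁻¹' (insert (Sum.inr p) (Sum.inl '' W)) = W := by
    ext x
    simp [Set.mem_insert_iff, Sum.inl_injective.mem_set_image]
  rw [isOpen_kat_iff]
  refine ⟨by exact (congrArg IsOpen hpre).mpr hW, ?_⟩
  rintro q hq
  refine (congrArg (· ∈ q.1.val) hpre).mpr ?_
  rcases hq with h | ⟨x, -, hx⟩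
  · obtain rfl : q = p := Sum.inr_injective h
    exact hp
  · exact absurd hx (by simp)

/-- The basic open set of the strict extension determined by `W` open in `X`. -/
def obasic (n : ℕ) (W : Set X) : Set (nKatetov X n) :=
  @oSet _ (nKatetovTop X n) (Set.range Sum.inl) (Sum.inl '' W)

lemma mem_obasic_inl {W : Set X} (hW : IsOpen W) (x : X) :
    Sum.inl x ∈ obasic n W ↔ x ∈ W := by
  constructor
  · rintro ⟨V, hV, hxV, hVX⟩
    have h1 : (Sum.inl x : nKatetov X n) ∈ V ∩ Set.range Sum.inl := ⟨hxV, x, rfl⟩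
    rw [hVX] at h1
    exact Sum.inl_injective.mem_set_image.1 h1.1
  · intro hx
    exact ⟨Sum.inl '' W, isOpen_inl_image hW, ⟨x, hx, rfl⟩, rfl⟩

lemma mem_obasic_inr {W : Set X} (hW : IsOpen W) (p : KPoints X n) :
    Sum.inr p ∈ obasic n W ↔ W ∈ p.1.val := by
  constructor
  · rintro ⟨V, hV, hpV, hVX⟩
    have h1 : Sum.inl ⁻¹' V ∈ p.1.val := (isOpen_kat_iff.1 hV).2 p hpV
    have h2 : Sum.inl ⁻¹' V = W := by
      have h3 := congrArg (fun S => Sum.inl ⁻¹' S) hVX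
      ext x
      exact ⟨fun hx => Sum.inl_injective.mem_set_image.1
          ((Set.ext_iff.1 hVX (Sum.inl x)).1 ⟨hx, x, rfl⟩).1,
        fun hx => ((Set.ext_iff.1 hVX (Sum.inl x)).2 ⟨⟨x, hx, rfl⟩, x, rfl⟩).1⟩
    rwa [h2] at h1
  · intro hp
    refine ⟨insert (Sum.inr p) (Sum.inl '' W), isOpen_insert_inr hW p hp,
      Set.mem_insert _ _, ?_⟩
    refine Set.insert_inter_of_notMem ?_
    rintro ⟨x, hx⟩
    exact Sum.inl_ne_inr hx

lemma oSet_eq_obasic {U : Set (nKatetov X n)} :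
    @oSet _ (nKatetovTop X n) (Set.range Sum.inl) U = obasic n (Sum.inl ⁻¹' U) := by
  unfold oSet obasic
  have hXU : U ∩ Set.range Sum.inl = (Sum.inl '' (Sum.inl ⁻¹' U)) ∩ Set.range Sum.inl := by
    exact (Set.image_preimage_eq_inter_range (f := (Sum.inl : X → nKatetov X n)) (t := U)).symm.trans
      (Set.inter_eq_self_of_subset_left (Set.image_subset_range _ _)).symm
  ext p
  constructor
  · rintro ⟨V, hV, hpV, hVX⟩; exact ⟨V, hV, hpV, hVX.trans hXU⟩
  · rintro ⟨V, hV, hpV, hVX⟩; exact ⟨V, hV, hpV, hVX.trans hXU.symm⟩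

lemma obasic_inter {W₁ W₂ : Set X} (h₁ : IsOpen W₁) (h₂ : IsOpen W₂) :
    obasic n W₁ ∩ obasic n W₂ = obasic (X := X) n (W₁ ∩ W₂) := by
  ext y
  cases y with
  | inl x =>
      exact (and_congr (mem_obasic_inl h₁ x) (mem_obasic_inl h₂ x)).trans
        (mem_obasic_inl (h₁.inter h₂) x).symm
  | inr p =>
      refine (and_congr (mem_obasic_inr h₁ p) (mem_obasic_inr h₂ p)).trans
        (Iff.trans ?_ (mem_obasic_inr (h₁.inter h₂) p).symm)
      constructor
      · rintro ⟨ha, hb⟩; exact p.1.2.1.1.inter_mem _ ha _ hb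
      · intro hab
        exact ⟨p.1.2.1.1.superset_mem _ hab _ h₁ Set.inter_subset_left,
          p.1.2.1.1.superset_mem _ hab _ h₂ Set.inter_subset_right⟩

lemma gen_eq (X : Type u) [TopologicalSpace X] (n : ℕ) :
    {T | ∃ U, IsOpen[nKatetovTop X n] U ∧
        T = @oSet _ (nKatetovTop X n) (Set.range Sum.inl) U}
      = {T | ∃ W : Set X, IsOpen W ∧ T = obasic n W} := by
  ext T
  constructor
  · rintro ⟨U, hU, rfl⟩
    exact ⟨Sum.inl ⁻¹' U, (isOpen_kat_iff.1 hU).1, oSet_eq_obasic⟩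
  · rintro ⟨W, hW, rfl⟩
    exact ⟨Sum.inl '' W, isOpen_inl_image hW, rfl⟩

lemma obasic_isBasis (X : Type u) [TopologicalSpace X] (n : ℕ) :
    @TopologicalSpace.IsTopologicalBasis (nKatetov X n)
      (@strictTop _ (nKatetovTop X n) (Set.range Sum.inl))
      {T | ∃ W : Set X, IsOpen W ∧ T = obasic n W} := by
  letI := @strictTop _ (nKatetovTop X n) (Set.range (Sum.inl : X → nKatetov X n))
  refine ⟨?_, ?_, ?_⟩
  · rintro t₁ ⟨W₁, h₁, rfl⟩ t₂ ⟨W₂, h₂, rfl⟩ y hy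
    refine ⟨obasic n (W₁ ∩ W₂), ⟨W₁ ∩ W₂, h₁.inter h₂, rfl⟩, ?_, ?_⟩
    · rw [← obasic_inter h₁ h₂]; exact hy
    · rw [← obasic_inter h₁ h₂]
  · rw [Set.sUnion_eq_univ_iff]
    intro y
    refine ⟨obasic n Set.univ, ⟨Set.univ, isOpen_univ, rfl⟩, ?_⟩
    cases y with
    | inl x => exact (mem_obasic_inl isOpen_univ x).2 (Set.mem_univ x)
    | inr p => exact (mem_obasic_inr isOpen_univ p).2 (univ_mem_of_isOpenFilter p.1.2.1.1)
  · exact congrArg TopologicalSpace.generateFrom (gen_eq X n)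

lemma obasic_isOpen_strict {W : Set X} (hW : IsOpen W) :
    IsOpen[@strictTop _ (nKatetovTop X n) (Set.range Sum.inl)] (obasic n W) := by
  letI := @strictTop _ (nKatetovTop X n) (Set.range (Sum.inl : X → nKatetov X n))
  exact (obasic_isBasis X n).isOpen ⟨W, hW, rfl⟩

lemma exists_obasic_subset {T : Set (nKatetov X n)}
    (hT : IsOpen[@strictTop _ (nKatetovTop X n) (Set.range Sum.inl)] T)
    {y : nKatetov X n} (hy : y ∈ T) :
    ∃ W : Set X, IsOpen W ∧ y ∈ obasic n W ∧ obasic n W ⊆ T := by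
  letI := @strictTop _ (nKatetovTop X n) (Set.range (Sum.inl : X → nKatetov X n))
  obtain ⟨v, ⟨W, hW, rfl⟩, hyv, hvT⟩ :=
    (obasic_isBasis X n).exists_subset_of_mem_open hy hT
  exact ⟨W, hW, hyv, hvT⟩

end Aux

section Parts

variable {X : Type u} [TopologicalSpace X] {n : ℕ}

lemma part_e (A : Set X) (hA : IsClosed A) (hnd : interior (closure A) = ∅) :
    IsClosed[@strictTop _ (nKatetovTop X n) (Set.range Sum.inl)] (Sum.inl '' A) := by
  letI := @strictTop _ (nKatetovTop X n) (Set.range (Sum.inl : X → nKatetov X n))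
  have hiA : interior A = ∅ := by rw [← hA.closure_eq]; exact hnd
  have hAc : ∀ q : KPoints X n, Aᶜ ∈ q.1.val := by
    intro q
    apply mem_of_meets q.1.2.1 hA.isOpen_compl
    intro V hV
    by_contra hE
    rw [Set.not_nonempty_iff_eq_empty] at hE
    have hVA : V ⊆ A := fun z hz => by
      by_contra hz'
      exact Set.eq_empty_iff_forall_notMem.1 hE z ⟨hz', hz⟩
    have hVi : V ⊆ interior A :=
      ((q.1.2.1.1.isOpen_mem V hV).subset_interior_iff).2 hVA
    obtain ⟨z, hz⟩ := q.1.2.1.1.nonempty_mem V hV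
    rw [hiA] at hVi
    exact hVi hz
  have hcompl : (Sum.inl '' A : Set (nKatetov X n))ᶜ = obasic n Aᶜ := by
    ext y
    cases y with
    | inl x =>
        exact (not_congr Sum.inl_injective.mem_set_image).trans
          (mem_obasic_inl hA.isOpen_compl x).symm
    | inr q =>
        refine Iff.trans ?_ (mem_obasic_inr hA.isOpen_compl q).symm
        constructor
        · intro _; exact hAc q
        · rintro - ⟨x, -, hx⟩
          exact Sum.inl_ne_inr hx
  refine { isOpen_compl := ?_ }
  rw [hcompl]
  exact obasic_isOpen_strict hA.isOpen_compl

lemma part_d (hn : 2 ≤ n) (K : Set (nKatetov X n))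
    (hKS : K ⊆ (Set.range (Sum.inl : X → nKatetov X n))ᶜ)
    (hKc : IsClosed[@strictTop _ (nKatetovTop X n) (Set.range Sum.inl)] K) :
    @IsCompact _ (@strictTop _ (nKatetovTop X n) (Set.range Sum.inl)) K := by
  classical
  letI σ := @strictTop _ (nKatetovTop X n) (Set.range (Sum.inl : X → nKatetov X n))
  apply isCompact_of_finite_subcover
  intro ι U hUo hcov
  by_contra hfin
  push_neg at hfin
  rcases K.eq_empty_or_nonempty with rfl | hKne
  · exact hfin ∅ (by simp)
  set 𝒥 : Set (Set X) := {W | IsOpen W ∧ ∃ i, obasic n W ⊆ U i} with h𝒥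
  set 𝒱 : Set (Set X) := {W | IsOpen W ∧ obasic n W ∩ K = ∅} with h𝒱
  have factA : ∀ p ∈ K, ∃ W ∈ 𝒥, p ∈ obasic n W := by
    intro p hp
    obtain ⟨i, hi⟩ := Set.mem_iUnion.mp (hcov hp)
    obtain ⟨W, hWo, hpW, hWsub⟩ := exists_obasic_subset (hUo i) hi
    exact ⟨W, ⟨hWo, i, hWsub⟩, hpW⟩
  have factB : ∀ x : X, ∃ W ∈ 𝒱, x ∈ W := by
    intro x
    have hx : (Sum.inl x : nKatetov X n) ∈ Kᶜ := fun hx => hKS hx ⟨x, rfl⟩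
    obtain ⟨W, hWo, hxW, hWsub⟩ := exists_obasic_subset hKc.isOpen_compl hx
    refine ⟨W, ⟨hWo, ?_⟩, (mem_obasic_inl hWo x).1 hxW⟩
    rw [Set.eq_empty_iff_forall_notMem]
    exact fun y hy => hWsub hy.1 hy.2
  have factC : ∀ s : Finset (Set X), ↑s ⊆ 𝒥 → ∃ p ∈ K, ∀ W ∈ s, p ∉ obasic n W := by
    intro s hs
    by_contra hc
    push_neg at hc
    choose idx hidx using fun (W : Set X) (hW : W ∈ s) => (hs hW).2
    refine hfin (s.attach.image fun W => idx W.1 W.2) ?_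
    intro p hp
    obtain ⟨W, hWs, hpW⟩ := hc p hp
    refine Set.mem_biUnion ?_ (hidx W hWs hpW)
    exact Finset.mem_image.2 ⟨⟨W, hWs⟩, Finset.mem_attach _ _, rfl⟩
  have key : ∀ s : Finset (Set X), ↑s ⊆ 𝒥 ∪ 𝒱 → (⋂ W ∈ s, (closure W)ᶜ).Nonempty := by
    intro s hs
    obtain ⟨p, hpK, hp⟩ := factC (s.filter (· ∈ 𝒥)) (by
      intro W hW
      rw [Finset.mem_coe, Finset.mem_filter] at hW
      exact hW.2)
    obtain ⟨q, rfl⟩ : ∃ q, p = Sum.inr q := by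
      cases p with
      | inl x => exact absurd ⟨x, rfl⟩ (hKS hpK)
      | inr q => exact ⟨q, rfl⟩
    have hFq : IsOpenUltrafilter q.1.val := q.1.2.1
    have hWo : ∀ W ∈ s, IsOpen W := by
      intro W hW
      rcases hs hW with h | h <;> exact h.1
    have hnot : ∀ W ∈ s, W ∉ q.1.val := by
      intro W hWs hWF
      have hmem : Sum.inr q ∈ obasic n W := (mem_obasic_inr (hWo W hWs) q).2 hWF
      rcases hs hWs with hJ | hV
      · exact hp W (Finset.mem_filter.mpr ⟨hWs, hJ⟩) hmem
      · exact Set.eq_empty_iff_forall_notMem.1 hV.2 _ ⟨hmem, hpK⟩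
    choose V hV1 hV2 using fun (W : Set X) (hW : W ∈ s) =>
      exists_disjoint_of_not_mem hFq (hWo W hW) (hnot W hW)
    have hinter : (⋂ W ∈ s.attach, V W.1 W.2) ∈ q.1.val :=
      finset_biInter_mem hFq.1 s.attach _ (fun W _ => hV1 W.1 W.2)
    obtain ⟨x, hx⟩ := hFq.1.nonempty_mem _ hinter
    refine ⟨x, Set.mem_iInter₂.2 fun W hW => ?_⟩
    have hxV : x ∈ V W hW := by
      have := Set.mem_iInter₂.1 hx ⟨W, hW⟩ (Finset.mem_attach _ _)
      exact this
    intro hxcl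
    obtain ⟨z, hz⟩ := mem_closure_iff.1 hxcl _ (hFq.1.isOpen_mem _ (hV1 W hW)) hxV
    exact Set.eq_empty_iff_forall_notMem.1 (hV2 W hW) z ⟨hz.2, hz.1⟩
  set F₀ : Set (Set X) :=
    {G | IsOpen G ∧ ∃ s : Finset (Set X), ↑s ⊆ 𝒥 ∪ 𝒱 ∧ (⋂ W ∈ s, (closure W)ᶜ) ⊆ G}
    with hF₀def
  have hF₀ : IsOpenFilter F₀ := by
    constructor
    · exact ⟨Set.univ, isOpen_univ, ∅, by simp, by simp⟩
    · exact fun G hG => hG.1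
    · rintro G ⟨hGo, s, hs, hsub⟩
      exact (key s hs).mono hsub
    · rintro G ⟨hGo, s, hs, hsub⟩ G' ⟨hG'o, s', hs', hsub'⟩
      refine ⟨hGo.inter hG'o, s ∪ s',
        by rw [Finset.coe_union]; exact Set.union_subset hs hs', ?_⟩
      intro x hx
      rw [Set.mem_iInter₂] at hx
      exact ⟨hsub (Set.mem_iInter₂.2 fun W hW => hx W (Finset.mem_union_left _ hW)),
        hsub' (Set.mem_iInter₂.2 fun W hW => hx W (Finset.mem_union_right _ hW))⟩
    · rintro G ⟨hGo, s, hs, hsub⟩ G' hG'o hGG'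
      exact ⟨hG'o, s, hs, hsub.trans hGG'⟩
  obtain ⟨F, hF₀F, hFult⟩ := exists_openUltrafilter hF₀
  have hnotF : ∀ W ∈ 𝒥 ∪ 𝒱, W ∉ F := by
    intro W hW hWF
    have hclW : (closure W)ᶜ ∈ F := by
      refine hF₀F ⟨isClosed_closure.isOpen_compl, {W}, ?_, by simp⟩
      simpa using hW
    refine not_mem_of_disjoint hFult.1 hclW ?_ hWF
    rw [Set.eq_empty_iff_forall_notMem]
    exact fun x hx => hx.2 (subset_closure hx.1)
  have hadh : adh F = ∅ := by
    rw [Set.eq_empty_iff_forall_notMem]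
    intro x hx
    obtain ⟨W, hW𝒱, hxW⟩ := factB x
    have hmeets : ∀ V ∈ F, (W ∩ V).Nonempty := by
      intro V hV
      have hxcl : x ∈ closure V := by
        simp only [adh, Set.mem_iInter] at hx
        exact hx V hV
      exact mem_closure_iff.1 hxcl W hW𝒱.1 hxW
    exact hnotF W (Or.inr hW𝒱) (mem_of_meets hFult hW𝒱.1 hmeets)
  have hsmall : (adh F).encard < ((n - 1 : ℕ) : ℕ∞) := by
    rw [hadh, Set.encard_empty]
    have h1 : 0 < n - 1 := by omega
    exact_mod_cast h1
  have hfin' : 0 < n - 1 - (adh F).ncard := by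
    rw [hadh, Set.ncard_empty]
    omega
  set q : KPoints X n := ⟨⟨F, hFult, hsmall⟩, ⟨0, hfin'⟩⟩ with hqdef
  by_cases hpK : Sum.inr q ∈ K
  · obtain ⟨W, hW𝒥, hpW⟩ := factA _ hpK
    exact hnotF W (Or.inl hW𝒥) ((mem_obasic_inr hW𝒥.1 q).1 hpW)
  · obtain ⟨W, hWo, hpW, hWsub⟩ := exists_obasic_subset hKc.isOpen_compl hpK
    have hW𝒱 : W ∈ 𝒱 := ⟨hWo, by
      rw [Set.eq_empty_iff_forall_notMem]
      exact fun y hy => hWsub hy.1 hy.2⟩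
    exact hnotF W (Or.inr hW𝒱) ((mem_obasic_inr hWo q).1 hpW)

end Parts

theorem stmt18 {X : Type u} [TopologicalSpace X] (n : ℕ) (hn : 2 ≤ n)
    (hX : NHausdorff X n) :
    let σ : TopologicalSpace (nKatetov X n) :=
      @strictTop (nKatetov X n) (nKatetovTop X n) (Set.range Sum.inl)
    let S : Set (nKatetov X n) := (Set.range (Sum.inl : X → nKatetov X n))ᶜ
    let τ : TopologicalSpace ↥S := σ.induced Subtype.val
    -- (c) the remainder has a basis of clopen sets (is zero-dimensional)
    (∃ B : Set (Set ↥S), (∀ b ∈ B, @IsClopen ↥S τ b) ∧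
        @TopologicalSpace.IsTopologicalBasis ↥S τ B) ∧
    -- (d) every subset of the remainder closed in `n-σX` is compact
    (∀ K : Set (nKatetov X n), K ⊆ S → IsClosed[σ] K → @IsCompact _ σ K) ∧
    -- (e) every closed nowhere dense subset of `X` is closed in `n-σX`
    (∀ A : Set X, IsClosed A → interior (closure A) = (∅ : Set X) →
      IsClosed[σ] (Sum.inl '' A)) := by
  intro σ S τ
  refine ⟨?_, fun K hK hKc => part_d hn K hK hKc, fun A hA hnd => part_e A hA hnd⟩
  letI : TopologicalSpace (nKatetov X n) := σ
  letI : TopologicalSpace ↥S := τ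
  refine ⟨(Set.preimage (Subtype.val : ↥S → nKatetov X n)) ''
      {T | ∃ W : Set X, IsOpen W ∧ T = obasic n W}, ?_, ?_⟩
  · rintro b ⟨T, ⟨W, hW, rfl⟩, rfl⟩
    constructor
    · rw [← isOpen_compl_iff]
      refine isOpen_induced_iff.2
        ⟨⋃₀ {T | ∃ W' : Set X, IsOpen W' ∧ W' ∩ W = ∅ ∧ T = obasic n W'}, ?_, ?_⟩
      · apply isOpen_sUnion
        rintro T ⟨W', hW', -, rfl⟩
        exact obasic_isOpen_strict hW'
      · ext ⟨y, hy⟩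
        obtain ⟨q, rfl⟩ : ∃ q, y = Sum.inr q := by
          cases y with
          | inl x => exact absurd (⟨x, rfl⟩ : Sum.inl x ∈ Set.range Sum.inl) hy
          | inr q => exact ⟨q, rfl⟩
        simp only [Set.mem_preimage, Set.mem_compl_iff, Set.mem_sUnion, Set.mem_setOf_eq]
        constructor
        · rintro ⟨T, ⟨W', hW', hd, rfl⟩, hyT⟩ hyW
          have h1 : W' ∈ q.1.val := (mem_obasic_inr hW' q).1 hyT
          have h2 : W ∈ q.1.val := (mem_obasic_inr hW q).1 hyW
          obtain ⟨z, hz⟩ := q.1.2.1.1.nonempty_mem _ (q.1.2.1.1.inter_mem _ h1 _ h2)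
          exact Set.eq_empty_iff_forall_notMem.1 hd z hz
        · intro hyW
          have hnW : W ∉ q.1.val := fun h => hyW ((mem_obasic_inr hW q).2 h)
          obtain ⟨V, hVF, hVd⟩ := exists_disjoint_of_not_mem q.1.2.1 hW hnW
          have hVo := q.1.2.1.1.isOpen_mem V hVF
          exact ⟨obasic n V, ⟨V, hVo, by rw [Set.inter_comm]; exact hVd, rfl⟩,
            (mem_obasic_inr hVo q).2 hVF⟩
    · exact isOpen_induced_iff.2 ⟨obasic n W, obasic_isOpen_strict hW, rfl⟩
  · exact (obasic_isBasis X n).induced _
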